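/- arXiv:2002.06659 — 2 statements merged into one kernel-verified Lean document; each statement's English description precedes it below -/
import Mathlib

section
/- Let a, b ∈ ℝⁿ be two vectors each with nonnegative entries summing to 1 and sorted in non-increasing order (i.e., 1 ≥ a₁ ≥ a₂ ≥ ⋯ ≥ aₙ ≥ 0 and similarly for b). Then the squared ℓ2 distance satisfies ∑ᵢ (aᵢ − bᵢ)² ≤ (n−1)/n. -/
/-- Two sorted (non-increasing) probability vectors in ℝⁿ have squared ℓ2
distance at most (n-1)/n. -/
theorem sorted_prob_vec_sq_dist_le (n : ℕ) (a b : Fin n → ℝ)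
    (ha0 : ∀ i, 0 ≤ a i) (hb0 : ∀ i, 0 ≤ b i)
    (ha1 : ∀ i, a i ≤ 1) (hb1 : ∀ i, b i ≤ 1)
    (haSum : ∑ i, a i = 1) (hbSum : ∑ i, b i = 1)
    (haMono : ∀ i j : Fin n, i ≤ j → a j ≤ a i)
    (hbMono : ∀ i j : Fin n, i ≤ j → b j ≤ b i) :
    ∑ i, (a i - b i) ^ 2 ≤ ((n : ℝ) - 1) / n := by
  rcases Nat.eq_zero_or_pos n with h0 | hn
  · subst h0; simp at haSum
  have hnR : (0:ℝ) < n := by exact_mod_cast hn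
  set i0 : Fin n := ⟨0, hn⟩ with hi0
  have hle0 : ∀ i : Fin n, i0 ≤ i := fun i => by simp [hi0, Fin.le_def]
  have hA : (1:ℝ) ≤ n * a i0 := by
    calc (1:ℝ) = ∑ i, a i := haSum.symm
    _ ≤ ∑ _i : Fin n, a i0 := Finset.sum_le_sum (fun i _ => haMono i0 i (hle0 i))
    _ = n * a i0 := by simp [mul_comm]
  have hB : (1:ℝ) ≤ n * b i0 := by
    calc (1:ℝ) = ∑ i, b i := hbSum.symm
    _ ≤ ∑ _i : Fin n, b i0 := Finset.sum_le_sum (fun i _ => hbMono i0 i (hle0 i))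
    _ = n * b i0 := by simp [mul_comm]
  have hsqA : ∑ i, a i ^ 2 ≤ a i0 := by
    calc ∑ i, a i ^ 2 ≤ ∑ i, a i0 * a i :=
          Finset.sum_le_sum (fun i _ => by
            have := haMono i0 i (hle0 i)
            have := ha0 i
            nlinarith)
    _ = a i0 * ∑ i, a i := by rw [Finset.mul_sum]
    _ = a i0 := by rw [haSum, mul_one]
  have hsqB : ∑ i, b i ^ 2 ≤ b i0 := by
    calc ∑ i, b i ^ 2 ≤ ∑ i, b i0 * b i :=
          Finset.sum_le_sum (fun i _ => by
            have := hbMono i0 i (hle0 i)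
            have := hb0 i
            nlinarith)
    _ = b i0 * ∑ i, b i := by rw [Finset.mul_sum]
    _ = b i0 := by rw [hbSum, mul_one]
  have hab : a i0 * b i0 ≤ ∑ i, a i * b i :=
    Finset.single_le_sum (f := fun i => a i * b i)
      (fun i _ => mul_nonneg (ha0 i) (hb0 i)) (Finset.mem_univ i0)
  have hexp : ∑ i, (a i - b i) ^ 2
      = ∑ i, a i ^ 2 + ∑ i, b i ^ 2 - 2 * ∑ i, a i * b i := by
    rw [Finset.mul_sum, ← Finset.sum_add_distrib, ← Finset.sum_sub_distrib]
    exact Finset.sum_congr rfl (fun i _ => by ring)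
  rw [hexp]
  rw [le_div_iff₀ hnR]
  have h1 := ha1 i0
  have h2 := hb1 i0
  have hgA := mul_nonneg hnR.le (sub_nonneg.mpr hsqA)
  have hgB := mul_nonneg hnR.le (sub_nonneg.mpr hsqB)
  have hgC := mul_nonneg hnR.le (sub_nonneg.mpr hab)
  rcases Nat.lt_or_ge n 2 with hn2 | hn2
  · interval_cases n
    have : a i0 = 1 := by simpa [hi0] using haSum
    have : b i0 = 1 := by simpa [hi0] using hbSum
    have ea : ∑ i, a i ^ 2 = 1 := by simp_all [hi0]
    have eb : ∑ i, b i ^ 2 = 1 := by simp_all [hi0]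
    have ec : ∑ i, a i * b i = 1 := by simp_all [hi0]
    rw [ea, eb, ec]; norm_num
  · have hn2R : (2:ℝ) ≤ n := by exact_mod_cast hn2
    rcases le_total (2 * a i0) 1 with hx | hx
    · nlinarith [mul_nonneg hnR.le
        (mul_nonneg (sub_nonneg.mpr h2) (by linarith : (0:ℝ) ≤ 1 - 2 * a i0))]
    · nlinarith [mul_nonneg (sub_nonneg.mpr hB) (by linarith : (0:ℝ) ≤ 2 * a i0 - 1),
        mul_nonneg (by linarith : (0:ℝ) ≤ (n:ℝ) - 2) (sub_nonneg.mpr h1)]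
end

section
/- Let g, g̃ ∈ ℝⁿ be non-increasing vectors with ‖g − g̃‖₂ ≤ ε, and let σ, σ̃ be permutations that differ only by transposing two indices i and j where the corresponding entries satisfy |gᵢ − g_j| ≤ δ and |g̃ᵢ − g̃_j| ≤ δ. Then ‖σ⁻¹(g) − σ̃⁻¹(g̃)‖₁ ≤ ‖g − g̃‖₁ + |gᵢ − g̃_j| + |g_j − g̃ᵢ| ≤ ‖g − g̃‖₁ + 2δ + |gᵢ − g̃ᵢ| + |g_j − g̃_j|. -/
/-- If two ranking permutations differ only by transposing two indices i, j
whose entries are δ-close in both sorted vectors g and g̃, then the ℓ1 distance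
between the reconstructed vectors σ⁻¹(g) and σ̃⁻¹(g̃) is controlled:
it is at most ‖g - g̃‖₁ + |gᵢ - g̃ⱼ| + |gⱼ - g̃ᵢ|, which in turn is at most
‖g - g̃‖₁ + 2δ + |gᵢ - g̃ᵢ| + |gⱼ - g̃ⱼ|. -/
theorem transposed_permutation_l1_bound (n : ℕ) (g g' : Fin n → ℝ) (δ : ℝ)
    (hg : ∀ i j : Fin n, i ≤ j → g j ≤ g i)
    (hg' : ∀ i j : Fin n, i ≤ j → g' j ≤ g' i)
    (σ σ' : Equiv.Perm (Fin n)) (i j : Fin n)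
    (hσσ' : ∀ k, σ' k = σ (Equiv.swap i j k))
    (hδg : |g i - g j| ≤ δ) (hδg' : |g' i - g' j| ≤ δ) :
    ∑ k, |g (σ⁻¹ k) - g' (σ'⁻¹ k)|
      ≤ (∑ k, |g k - g' k|) + |g i - g' j| + |g j - g' i| ∧
    (∑ k, |g k - g' k|) + |g i - g' j| + |g j - g' i|
      ≤ (∑ k, |g k - g' k|) + 2 * δ + |g i - g' i| + |g j - g' j| := by
  constructor
  · -- rewrite σ'⁻¹ in terms of swap and σ⁻¹
    have hσ'eq : σ' = σ * Equiv.swap i j := Equiv.ext hσσ'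
    have hinv : ∀ k, σ'⁻¹ k = Equiv.swap i j (σ⁻¹ k) := by
      intro k
      rw [hσ'eq, mul_inv_rev]
      simp
    have hsum : (∑ k, |g (σ⁻¹ k) - g' (σ'⁻¹ k)|)
        = ∑ m, |g m - g' (Equiv.swap i j m)| := by
      calc (∑ k, |g (σ⁻¹ k) - g' (σ'⁻¹ k)|)
          = ∑ k, |g (σ⁻¹ k) - g' (Equiv.swap i j (σ⁻¹ k))| := by
            simp only [hinv]
        _ = ∑ m, |g m - g' (Equiv.swap i j m)| :=
            Equiv.sum_comp σ⁻¹ (fun m => |g m - g' (Equiv.swap i j m)|)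
    rw [hsum]
    rcases eq_or_ne i j with rfl | hij
    · simp only [Equiv.swap_self, Equiv.refl_apply]
      have h1 : (0:ℝ) ≤ |g i - g' i| := abs_nonneg _
      linarith
    · have hmem : ∀ m : Fin n, m ∈ Finset.univ := fun m => Finset.mem_univ m
      have hji : j ∈ Finset.univ.erase i := Finset.mem_erase.2 ⟨Ne.symm hij, hmem j⟩
      set F : Fin n → ℝ := fun m => |g m - g' (Equiv.swap i j m)| with hF
      set G : Fin n → ℝ := fun m => |g m - g' m| with hG
      have splitF : (∑ m, F m) = F i + (F j + ∑ m ∈ (Finset.univ.erase i).erase j, F m) := by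
        rw [Finset.add_sum_erase _ F hji, Finset.add_sum_erase _ F (hmem i)]
      have splitG : (∑ m, G m) = G i + (G j + ∑ m ∈ (Finset.univ.erase i).erase j, G m) := by
        rw [Finset.add_sum_erase _ G hji, Finset.add_sum_erase _ G (hmem i)]
      have heq : ∑ m ∈ (Finset.univ.erase i).erase j, F m
          = ∑ m ∈ (Finset.univ.erase i).erase j, G m := by
        apply Finset.sum_congr rfl
        intro m hm
        have hmj : m ≠ j := (Finset.mem_erase.1 hm).1
        have hmi : m ≠ i := (Finset.mem_erase.1 (Finset.mem_erase.1 hm).2).1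
        simp [hF, hG, Equiv.swap_apply_of_ne_of_ne hmi hmj]
      have hFi : F i = |g i - g' j| := by simp [hF]
      have hFj : F j = |g j - g' i| := by simp [hF]
      have hGi : (0:ℝ) ≤ G i := abs_nonneg _
      have hGj : (0:ℝ) ≤ G j := abs_nonneg _
      rw [splitF, splitG, heq, hFi, hFj]
      linarith
  · have h1 : |g i - g' j| ≤ |g i - g j| + |g j - g' j| := by
      have := abs_sub_le (g i) (g j) (g' j); linarith
    have h2 : |g j - g' i| ≤ |g j - g i| + |g i - g' i| := by
      have := abs_sub_le (g j) (g i) (g' i); linarith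
    have h3 : |g j - g i| = |g i - g j| := abs_sub_comm _ _
    linarith
end
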